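/- Let G be a weighted graph admitting a 1-dimensional decomposition such that lim_{|x|→∞} deg₊(x) = ∞ and max(deg₋(x), deg₀(x)) = o(deg₊(x)) as |x|→∞. Then for every ε > 0 there exists c_ε > 0 such that ⟨f, Δ_m f⟩ ≥ (1-ε)⟨f, deg(·)f⟩ - c_ε‖f‖² for all finitely supported f; consequently the form domains of Δ_m and of multiplication by deg coincide, and σ_ess(Δ_m) = ∅. -/

import Mathlib

lemma tsum_double_reduce {V : Type*} (g : V → V → ℝ) (T : Finset V)
    (hT : ∀ x y, g x y ≠ 0 → x ∈ T ∧ y ∈ T) :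
    ∑' x, ∑' y, g x y = ∑ x ∈ T, ∑ y ∈ T, g x y := by
  have h1 : ∀ x ∉ T, (∑' y, g x y) = 0 := by
    intro x hx
    have h : ∀ y, g x y = 0 := fun y => by
      by_contra h; exact hx (hT x y h).1
    simp [h]
  rw [tsum_eq_sum h1]
  refine Finset.sum_congr rfl fun x _ => ?_
  exact tsum_eq_sum fun y hy => by by_contra h; exact hy (hT x y h).2

lemma sq_bound (δ a b : ℝ) (hδ : 0 < δ) :
    (1 - δ) * a ^ 2 - (1 / δ - 1) * b ^ 2 ≤ (a - b) ^ 2 := by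
  have h2 : δ * ((a - b) ^ 2 - ((1 - δ) * a ^ 2 - (1 / δ - 1) * b ^ 2))
      = (δ * a - b) ^ 2 := by
    field_simp
    ring
  have h4 : 0 ≤ (a - b) ^ 2 - ((1 - δ) * a ^ 2 - (1 / δ - 1) * b ^ 2) :=
    (mul_nonneg_iff_of_pos_left hδ).mp (by rw [h2]; exact sq_nonneg _)
  linarith

set_option maxHeartbeats 1000000 in


/-- Theorem on graphs with `deg₊ → ∞` and `max(deg₋, deg₀) = o(deg₊)`:
(1) for every `ε > 0` there is `c_ε > 0` with
`⟨f, Δ_m f⟩ ≥ (1-ε)⟨f, deg f⟩ - c_ε‖f‖²` for all finitely supported `f`;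
(2) the form norms of `Δ_m` and of multiplication by `deg` are equivalent on
the core of finitely supported functions (equality of form domains);
(3) the essential spectrum of `Δ_m` is empty, expressed via Persson's
characterization: for every `M` there is a finite set `K` outside of which the
form is bounded below by `M‖f‖²`. -/
theorem sparse_weyl_preparation
    {V : Type*} [Countable V]
    (E : V → V → ℝ) (m : V → ℝ) (ℓ : V → ℕ)
    (hE_symm : ∀ x y, E x y = E y x)
    (hE_nonneg : ∀ x y, 0 ≤ E x y)
    (hE_diag : ∀ x, E x x = 0)
    (hloc : ∀ x, {y | 0 < E x y}.Finite)
    (hlev_fin : ∀ n, {x | ℓ x = n}.Finite)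
    (hlev : ∀ x y, 0 < E x y → ℓ x ≤ ℓ y + 1 ∧ ℓ y ≤ ℓ x + 1)
    (hm : ∀ x, 0 < m x)
    (degp degm deg0 deg : V → ℝ)
    (hdegp : ∀ x, degp x = (∑' y, if ℓ y = ℓ x + 1 then E x y else 0) / m x)
    (hdegm : ∀ x, degm x = (∑' y, if ℓ y + 1 = ℓ x then E x y else 0) / m x)
    (hdeg0 : ∀ x, deg0 x = (∑' y, if ℓ y = ℓ x then E x y else 0) / m x)
    (hdeg : ∀ x, deg x = (∑' y, E x y) / m x)
    (hlim : ∀ M : ℝ, ∃ N : ℕ, ∀ x, N ≤ ℓ x → M ≤ degp x)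
    (hsmall : ∀ ε : ℝ, 0 < ε → ∃ N : ℕ, ∀ x, N ≤ ℓ x →
      max (degm x) (deg0 x) ≤ ε * degp x) :
    (∀ ε : ℝ, 0 < ε → ∃ c : ℝ, 0 < c ∧ ∀ f : V → ℝ,
      (Function.support f).Finite →
        (1 - ε) * (∑' x, deg x * (f x) ^ 2 * m x)
            - c * (∑' x, (f x) ^ 2 * m x) ≤
          (1 / 2) * ∑' x, ∑' y, E x y * (f x - f y) ^ 2) ∧
    (∃ C : ℝ, 0 < C ∧ ∀ f : V → ℝ, (Function.support f).Finite →
      ((1 / 2) * (∑' x, ∑' y, E x y * (f x - f y) ^ 2)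
          + (∑' x, (f x) ^ 2 * m x)
        ≤ C * ((∑' x, deg x * (f x) ^ 2 * m x) + ∑' x, (f x) ^ 2 * m x)) ∧
      ((∑' x, deg x * (f x) ^ 2 * m x) + (∑' x, (f x) ^ 2 * m x)
        ≤ C * ((1 / 2) * (∑' x, ∑' y, E x y * (f x - f y) ^ 2)
            + ∑' x, (f x) ^ 2 * m x))) ∧
    (∀ M : ℝ, ∃ K : Finset V, ∀ f : V → ℝ, (Function.support f).Finite →
      (∀ x ∈ K, f x = 0) →
        M * (∑' x, (f x) ^ 2 * m x) ≤
          (1 / 2) * ∑' x, ∑' y, E x y * (f x - f y) ^ 2) := by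
  classical
  classical
  -- pointwise facts
  have hdegp_nn : ∀ x, 0 ≤ degp x := fun x => by
    rw [hdegp x]
    exact div_nonneg (tsum_nonneg fun y => by
      split_ifs with h; exacts [hE_nonneg x y, le_rfl]) (hm x).le
  have hdegm_nn : ∀ x, 0 ≤ degm x := fun x => by
    rw [hdegm x]
    exact div_nonneg (tsum_nonneg fun y => by
      split_ifs with h; exacts [hE_nonneg x y, le_rfl]) (hm x).le
  have hdeg0_nn : ∀ x, 0 ≤ deg0 x := fun x => by
    rw [hdeg0 x]
    exact div_nonneg (tsum_nonneg fun y => by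
      split_ifs with h; exacts [hE_nonneg x y, le_rfl]) (hm x).le
  have hdeg_nn : ∀ x, 0 ≤ deg x := fun x => by
    rw [hdeg x]
    exact div_nonneg (tsum_nonneg fun y => hE_nonneg x y) (hm x).le
  have hsplitE : ∀ x y, E x y = (if ℓ y = ℓ x + 1 then E x y else 0)
      + (if ℓ y + 1 = ℓ x then E x y else 0) + (if ℓ y = ℓ x then E x y else 0) := by
    intro x y
    rcases eq_or_lt_of_le (hE_nonneg x y) with h | h
    · split_ifs <;> linarith
    · obtain ⟨h1, h2⟩ := hlev x y h
      split_ifs <;> first | linarith | (exfalso; omega)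
  have hdeg_split : ∀ x, deg x = degp x + degm x + deg0 x := by
    intro x
    have hW : ∀ y, E x y ≠ 0 → y ∈ (hloc x).toFinset := fun y hy =>
      (hloc x).mem_toFinset.mpr (lt_of_le_of_ne (hE_nonneg x y) (Ne.symm hy))
    have e0 : ∑' y, E x y = ∑ y ∈ (hloc x).toFinset, E x y :=
      tsum_eq_sum fun y hy => by by_contra h; exact hy (hW y h)
    have e1 : (∑' y, if ℓ y = ℓ x + 1 then E x y else 0)
        = ∑ y ∈ (hloc x).toFinset, (if ℓ y = ℓ x + 1 then E x y else 0) :=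
      tsum_eq_sum fun y hy => by
        have h : E x y = 0 := by by_contra h; exact hy (hW y h)
        simp [h]
    have e2 : (∑' y, if ℓ y + 1 = ℓ x then E x y else 0)
        = ∑ y ∈ (hloc x).toFinset, (if ℓ y + 1 = ℓ x then E x y else 0) :=
      tsum_eq_sum fun y hy => by
        have h : E x y = 0 := by by_contra h; exact hy (hW y h)
        simp [h]
    have e3 : (∑' y, if ℓ y = ℓ x then E x y else 0)
        = ∑ y ∈ (hloc x).toFinset, (if ℓ y = ℓ x then E x y else 0) :=
      tsum_eq_sum fun y hy => by
        have h : E x y = 0 := by by_contra h; exact hy (hW y h)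
        simp [h]
    rw [hdeg x, hdegp x, hdegm x, hdeg0 x, e0, e1, e2, e3, ← add_div,
      ← add_div]
    congr 1
    rw [← Finset.sum_add_distrib, ← Finset.sum_add_distrib]
    exact Finset.sum_congr rfl fun y _ => hsplitE x y
  -- Q ≤ 4 D
  have hQ4D : ∀ f : V → ℝ, (Function.support f).Finite →
      (∑' x, ∑' y, E x y * (f x - f y) ^ 2) ≤ 4 * ∑' x, deg x * (f x) ^ 2 * m x := by
    intro f hf
    set S : Finset V := hf.toFinset with hSdef
    have hSmem : ∀ x, f x ≠ 0 → x ∈ S := fun x hx => hf.mem_toFinset.mpr hx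
    have hSmem' : ∀ x, x ∉ S → f x = 0 := fun x hx => by
      by_contra h; exact hx (hSmem x h)
    set T : Finset V := S ∪ S.biUnion (fun y => (hloc y).toFinset) with hTdef
    have hST : S ⊆ T := Finset.subset_union_left
    have hTnb : ∀ x y, x ∈ S → 0 < E x y → y ∈ T := fun x y hx h =>
      Finset.mem_union_right _ (Finset.mem_biUnion.mpr ⟨x, hx, (hloc x).mem_toFinset.mpr h⟩)
    have hTnb' : ∀ x y, y ∈ S → 0 < E x y → x ∈ T := fun x y hy h =>
      hTnb y x hy (by rw [hE_symm y x]; exact h)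
    have hTkey : ∀ x y, E x y * (f x - f y) ^ 2 ≠ 0 → x ∈ T ∧ y ∈ T := by
      intro x y h
      have hE : 0 < E x y := lt_of_le_of_ne (hE_nonneg x y) fun h' => h (by rw [← h']; ring)
      by_cases hx : f x = 0
      · have hy : f y ≠ 0 := by
          intro h'
          exact h (by rw [hx, h']; ring)
        exact ⟨hTnb' x y (hSmem y hy) hE, hST (hSmem y hy)⟩
      · exact ⟨hST (hSmem x hx), hTnb x y (hSmem x hx) hE⟩
    have hQred := tsum_double_reduce (fun x y => E x y * (f x - f y) ^ 2) T hTkey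
    have hEvanish : ∀ x, x ∈ S → ∀ y, y ∉ T → E x y = 0 := fun x hx y hy => by
      by_contra h
      exact hy (hTnb x y hx (lt_of_le_of_ne (hE_nonneg x y) (Ne.symm h)))
    have hrow : ∀ x ∈ S, ∑ y ∈ T, E x y = deg x * m x := by
      intro x hx
      rw [hdeg x, div_mul_cancel₀ _ (ne_of_gt (hm x))]
      exact (tsum_eq_sum fun y hy => hEvanish x hx y hy).symm
    have hDred : ∑' x, deg x * (f x) ^ 2 * m x = ∑ x ∈ S, deg x * (f x) ^ 2 * m x :=
      tsum_eq_sum fun x hx => by rw [hSmem' x hx]; ring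
    rw [hQred, hDred]
    have step1 : ∑ x ∈ T, ∑ y ∈ T, E x y * (f x - f y) ^ 2
        ≤ ∑ x ∈ T, ∑ y ∈ T, (2 * (E x y * (f x) ^ 2) + 2 * (E x y * (f y) ^ 2)) := by
      refine Finset.sum_le_sum fun x _ => Finset.sum_le_sum fun y _ => ?_
      have h : (f x - f y) ^ 2 ≤ 2 * (f x) ^ 2 + 2 * (f y) ^ 2 := by
        nlinarith [sq_nonneg (f x + f y)]
      calc E x y * (f x - f y) ^ 2 ≤ E x y * (2 * (f x) ^ 2 + 2 * (f y) ^ 2) :=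
            mul_le_mul_of_nonneg_left h (hE_nonneg x y)
        _ = 2 * (E x y * (f x) ^ 2) + 2 * (E x y * (f y) ^ 2) := by ring
    have sumA : ∑ x ∈ T, ∑ y ∈ T, E x y * (f x) ^ 2
        = ∑ x ∈ S, deg x * (f x) ^ 2 * m x := by
      rw [show (∑ x ∈ T, ∑ y ∈ T, E x y * (f x) ^ 2)
          = ∑ x ∈ T, (∑ y ∈ T, E x y) * (f x) ^ 2
        from Finset.sum_congr rfl fun x _ => (Finset.sum_mul _ _ _).symm]
      rw [← Finset.sum_subset hST (fun x _ hx => by rw [hSmem' x hx]; ring)]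
      exact Finset.sum_congr rfl fun x hx => by rw [hrow x hx]; ring
    have sumB : ∑ x ∈ T, ∑ y ∈ T, E x y * (f y) ^ 2
        = ∑ x ∈ S, deg x * (f x) ^ 2 * m x := by
      rw [Finset.sum_comm]
      rw [show (∑ y ∈ T, ∑ x ∈ T, E x y * (f y) ^ 2)
          = ∑ y ∈ T, (∑ x ∈ T, E x y) * (f y) ^ 2
        from Finset.sum_congr rfl fun y _ => (Finset.sum_mul _ _ _).symm]
      rw [← Finset.sum_subset hST (fun y _ hy => by rw [hSmem' y hy]; ring)]
      refine Finset.sum_congr rfl fun y hy => ?_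
      rw [show (∑ x ∈ T, E x y) = ∑ x ∈ T, E y x
        from Finset.sum_congr rfl fun x _ => hE_symm x y, hrow y hy]
      ring
    calc ∑ x ∈ T, ∑ y ∈ T, E x y * (f x - f y) ^ 2 ≤ _ := step1
      _ = 2 * (∑ x ∈ T, ∑ y ∈ T, E x y * (f x) ^ 2)
          + 2 * (∑ x ∈ T, ∑ y ∈ T, E x y * (f y) ^ 2) := by
        simp only [Finset.sum_add_distrib, ← Finset.mul_sum]
      _ = 4 * ∑ x ∈ S, deg x * (f x) ^ 2 * m x := by rw [sumA, sumB]; ring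
  have part1 : ∀ ε : ℝ, 0 < ε → ∃ c : ℝ, 0 < c ∧ ∀ f : V → ℝ,
      (Function.support f).Finite →
        (1 - ε) * (∑' x, deg x * (f x) ^ 2 * m x)
            - c * (∑' x, (f x) ^ 2 * m x) ≤
          (1 / 2) * ∑' x, ∑' y, E x y * (f x - f y) ^ 2 := by
    intro ε hε
    set δ : ℝ := min ε 1 / 2 with hδdef
    have hδ0 : 0 < δ := by
      rw [hδdef]; have := lt_min hε one_pos; linarith
    have hδhalf : δ ≤ 1 / 2 := by
      rw [hδdef]; have := min_le_right ε 1; linarith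
    have hδε : 2 * δ ≤ ε := by
      rw [hδdef]; have := min_le_left ε 1; linarith
    have h2δ : (2 : ℝ) ≤ 1 / δ := by
      rw [le_div_iff₀ hδ0]; linarith
    have hk0 : (0 : ℝ) ≤ 1 / δ - 1 := by linarith
    set ε' : ℝ := δ ^ 2 / 4 with hε'def
    have hε'0 : 0 < ε' := by rw [hε'def]; positivity
    have hkε' : (1 / δ - 1) * ε' = δ / 4 - δ ^ 2 / 4 := by
      rw [hε'def]; field_simp
    obtain ⟨N₁, hN₁⟩ := hsmall ε' hε'0
    set F : Finset V := (Finset.range N₁).biUnion (fun n => (hlev_fin n).toFinset) with hFdef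
    have hFmem : ∀ x, ℓ x < N₁ → x ∈ F := fun x hx => Finset.mem_biUnion.mpr
      ⟨ℓ x, Finset.mem_range.mpr hx, (hlev_fin (ℓ x)).mem_toFinset.mpr rfl⟩
    set c₀ : ℝ := ∑ x ∈ F, max (deg x) 0 with hc₀def
    set c₁ : ℝ := ∑ x ∈ F, max (degm x) 0 with hc₁def
    have hc₀ : 0 ≤ c₀ := Finset.sum_nonneg fun x _ => le_max_right _ _
    have hc₁ : 0 ≤ c₁ := Finset.sum_nonneg fun x _ => le_max_right _ _
    have hFb₀ : ∀ x ∈ F, deg x ≤ c₀ := fun x hx =>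
      le_trans (le_max_left _ _)
        (Finset.single_le_sum (fun y _ => le_max_right (deg y) 0) hx)
    have hFb₁ : ∀ x ∈ F, degm x ≤ c₁ := fun x hx =>
      le_trans (le_max_left _ _)
        (Finset.single_le_sum (fun y _ => le_max_right (degm y) 0) hx)
    have hbd₀ : ∀ x, deg x ≤ (1 + 2 * ε') * degp x + c₀ := by
      intro x
      by_cases hx : ℓ x < N₁
      · have h1 := hFb₀ x (hFmem x hx)
        have h2 : 0 ≤ (1 + 2 * ε') * degp x := mul_nonneg (by linarith) (hdegp_nn x)
        linarith
      · have h := hN₁ x (not_lt.mp hx)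
        have hdm : degm x ≤ ε' * degp x := le_trans (le_max_left _ _) h
        have hd0 : deg0 x ≤ ε' * degp x := le_trans (le_max_right _ _) h
        have := hdeg_split x
        nlinarith [hdegp_nn x]
    have hbd₁ : ∀ x, degm x ≤ ε' * degp x + c₁ := by
      intro x
      by_cases hx : ℓ x < N₁
      · have h1 := hFb₁ x (hFmem x hx)
        have h2 : 0 ≤ ε' * degp x := mul_nonneg hε'0.le (hdegp_nn x)
        linarith
      · have h := hN₁ x (not_lt.mp hx)
        have hdm : degm x ≤ ε' * degp x := le_trans (le_max_left _ _) h
        linarith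
    have hden : (0 : ℝ) < 1 + 2 * ε' := by linarith
    set α : ℝ := ((1 - δ) - (1 / δ - 1) * ε') / (1 + 2 * ε') with hαdef
    have hβ : α * (1 + 2 * ε') = (1 - δ) - (1 / δ - 1) * ε' :=
      div_mul_cancel₀ _ (ne_of_gt hden)
    have hnum : (0 : ℝ) ≤ (1 - δ) - (1 / δ - 1) * ε' := by
      rw [hkε']; nlinarith [hδ0, hδhalf]
    have hα0 : 0 ≤ α := div_nonneg hnum hden.le
    have hαε : 1 - ε ≤ α := by
      rw [hαdef, le_div_iff₀ hden, hkε', hε'def]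
      nlinarith [hδ0, hδhalf, hδε, mul_nonneg (mul_nonneg hδ0.le hδ0.le) hδ0.le,
        mul_le_mul_of_nonneg_right hδε (mul_nonneg hδ0.le hδ0.le),
        mul_le_mul_of_nonneg_left hδhalf hδ0.le]
    refine ⟨α * c₀ + (1 / δ - 1) * c₁ + 1,
      by nlinarith [mul_nonneg hα0 hc₀, mul_nonneg hk0 hc₁], ?_⟩
    intro f hf
    set S : Finset V := hf.toFinset with hSdef
    have hSmem : ∀ x, f x ≠ 0 → x ∈ S := fun x hx => hf.mem_toFinset.mpr hx
    have hSmem' : ∀ x, x ∉ S → f x = 0 := fun x hx => by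
      by_contra h; exact hx (hSmem x h)
    set T : Finset V := S ∪ S.biUnion (fun y => (hloc y).toFinset) with hTdef
    have hST : S ⊆ T := Finset.subset_union_left
    have hTnb : ∀ x y, x ∈ S → 0 < E x y → y ∈ T := fun x y hx h =>
      Finset.mem_union_right _ (Finset.mem_biUnion.mpr ⟨x, hx, (hloc x).mem_toFinset.mpr h⟩)
    have hTnb' : ∀ x y, y ∈ S → 0 < E x y → x ∈ T := fun x y hy h =>
      hTnb y x hy (by rw [hE_symm y x]; exact h)
    have hTkey : ∀ x y, E x y * (f x - f y) ^ 2 ≠ 0 → x ∈ T ∧ y ∈ T := by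
      intro x y h
      have hE : 0 < E x y := lt_of_le_of_ne (hE_nonneg x y) fun h' => h (by rw [← h']; ring)
      by_cases hx : f x = 0
      · have hy : f y ≠ 0 := by
          intro h'
          exact h (by rw [hx, h']; ring)
        exact ⟨hTnb' x y (hSmem y hy) hE, hST (hSmem y hy)⟩
      · exact ⟨hST (hSmem x hx), hTnb x y (hSmem x hx) hE⟩
    have hQred := tsum_double_reduce (fun x y => E x y * (f x - f y) ^ 2) T hTkey
    have hEvanish : ∀ x, x ∈ S → ∀ y, y ∉ T → E x y = 0 := fun x hx y hy => by
      by_contra h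
      exact hy (hTnb x y hx (lt_of_le_of_ne (hE_nonneg x y) (Ne.symm h)))
    have hrow_p : ∀ x ∈ S, (∑ y ∈ T, if ℓ y = ℓ x + 1 then E x y else 0)
        = degp x * m x := by
      intro x hx
      rw [hdegp x, div_mul_cancel₀ _ (ne_of_gt (hm x))]
      exact (tsum_eq_sum fun y hy => by simp [hEvanish x hx y hy]).symm
    have hrow_m : ∀ y ∈ S, (∑ x ∈ T, if ℓ y = ℓ x + 1 then E x y else 0)
        = degm y * m y := by
      intro y hy
      rw [hdegm y, div_mul_cancel₀ _ (ne_of_gt (hm y))]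
      rw [show (∑' z, if ℓ z + 1 = ℓ y then E y z else 0)
          = ∑ z ∈ T, (if ℓ z + 1 = ℓ y then E y z else 0) from
        tsum_eq_sum fun z hz => by simp [hEvanish y hy z hz]]
      exact Finset.sum_congr rfl fun x _ => if_congr eq_comm (hE_symm x y) rfl
    have hNred : ∑' x, (f x) ^ 2 * m x = ∑ x ∈ S, (f x) ^ 2 * m x :=
      tsum_eq_sum fun x hx => by rw [hSmem' x hx]; ring
    have hDred : ∑' x, deg x * (f x) ^ 2 * m x = ∑ x ∈ S, deg x * (f x) ^ 2 * m x :=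
      tsum_eq_sum fun x hx => by rw [hSmem' x hx]; ring
    rw [hQred, hDred, hNred]
    have hsplitQ : (∑ x ∈ T, ∑ y ∈ T, E x y * (f x - f y) ^ 2)
        = (∑ x ∈ T, ∑ y ∈ T, (if ℓ y = ℓ x + 1 then E x y else 0) * (f x - f y) ^ 2)
        + (∑ x ∈ T, ∑ y ∈ T, (if ℓ y + 1 = ℓ x then E x y else 0) * (f x - f y) ^ 2)
        + (∑ x ∈ T, ∑ y ∈ T, (if ℓ y = ℓ x then E x y else 0) * (f x - f y) ^ 2) := by
      simp only [← Finset.sum_add_distrib]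
      exact Finset.sum_congr rfl fun x _ => Finset.sum_congr rfl fun y _ => by
        rw [← add_mul, ← add_mul, ← hsplitE x y]
    have hQB : (∑ x ∈ T, ∑ y ∈ T, (if ℓ y + 1 = ℓ x then E x y else 0) * (f x - f y) ^ 2)
        = ∑ x ∈ T, ∑ y ∈ T, (if ℓ y = ℓ x + 1 then E x y else 0) * (f x - f y) ^ 2 := by
      rw [Finset.sum_comm]
      refine Finset.sum_congr rfl fun a _ => Finset.sum_congr rfl fun b _ => ?_
      have h1 : (if ℓ a + 1 = ℓ b then E b a else 0) = (if ℓ b = ℓ a + 1 then E a b else 0) :=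
        if_congr eq_comm (hE_symm b a) rfl
      rw [h1]; ring
    have hQH_nn : 0 ≤ ∑ x ∈ T, ∑ y ∈ T, (if ℓ y = ℓ x then E x y else 0) * (f x - f y) ^ 2 :=
      Finset.sum_nonneg fun x _ => Finset.sum_nonneg fun y _ => mul_nonneg
        (by split_ifs; exacts [hE_nonneg x y, le_rfl]) (sq_nonneg _)
    have hQF_lb : (1 - δ) * (∑ x ∈ T, ∑ y ∈ T, (if ℓ y = ℓ x + 1 then E x y else 0) * (f x) ^ 2)
        - (1 / δ - 1) * (∑ x ∈ T, ∑ y ∈ T, (if ℓ y = ℓ x + 1 then E x y else 0) * (f y) ^ 2)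
        ≤ ∑ x ∈ T, ∑ y ∈ T, (if ℓ y = ℓ x + 1 then E x y else 0) * (f x - f y) ^ 2 := by
      have h : ∀ x ∈ T, ∀ y ∈ T,
          (1 - δ) * ((if ℓ y = ℓ x + 1 then E x y else 0) * (f x) ^ 2)
          - (1 / δ - 1) * ((if ℓ y = ℓ x + 1 then E x y else 0) * (f y) ^ 2)
          ≤ (if ℓ y = ℓ x + 1 then E x y else 0) * (f x - f y) ^ 2 := by
        intro x _ y _
        have he : 0 ≤ (if ℓ y = ℓ x + 1 then E x y else 0) := by
          split_ifs; exacts [hE_nonneg x y, le_rfl]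
        calc (1 - δ) * ((if ℓ y = ℓ x + 1 then E x y else 0) * (f x) ^ 2)
            - (1 / δ - 1) * ((if ℓ y = ℓ x + 1 then E x y else 0) * (f y) ^ 2)
            = (if ℓ y = ℓ x + 1 then E x y else 0)
              * ((1 - δ) * (f x) ^ 2 - (1 / δ - 1) * (f y) ^ 2) := by ring
          _ ≤ _ := mul_le_mul_of_nonneg_left (sq_bound δ (f x) (f y) hδ0) he
      calc (1 - δ) * (∑ x ∈ T, ∑ y ∈ T, (if ℓ y = ℓ x + 1 then E x y else 0) * (f x) ^ 2)
          - (1 / δ - 1) * (∑ x ∈ T, ∑ y ∈ T, (if ℓ y = ℓ x + 1 then E x y else 0) * (f y) ^ 2)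
          = ∑ x ∈ T, ∑ y ∈ T,
            ((1 - δ) * ((if ℓ y = ℓ x + 1 then E x y else 0) * (f x) ^ 2)
              - (1 / δ - 1) * ((if ℓ y = ℓ x + 1 then E x y else 0) * (f y) ^ 2)) := by
            simp only [Finset.mul_sum, ← Finset.sum_sub_distrib]
        _ ≤ _ := Finset.sum_le_sum fun x hx => Finset.sum_le_sum fun y hy => h x hx y hy
    have sumAp : ∑ x ∈ T, ∑ y ∈ T, (if ℓ y = ℓ x + 1 then E x y else 0) * (f x) ^ 2
        = ∑ x ∈ S, degp x * (f x) ^ 2 * m x := by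
      rw [show (∑ x ∈ T, ∑ y ∈ T, (if ℓ y = ℓ x + 1 then E x y else 0) * (f x) ^ 2)
          = ∑ x ∈ T, (∑ y ∈ T, if ℓ y = ℓ x + 1 then E x y else 0) * (f x) ^ 2
        from Finset.sum_congr rfl fun x _ => (Finset.sum_mul _ _ _).symm]
      rw [← Finset.sum_subset hST (fun x _ hx => by rw [hSmem' x hx]; ring)]
      exact Finset.sum_congr rfl fun x hx => by rw [hrow_p x hx]; ring
    have sumBm : ∑ x ∈ T, ∑ y ∈ T, (if ℓ y = ℓ x + 1 then E x y else 0) * (f y) ^ 2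
        = ∑ x ∈ S, degm x * (f x) ^ 2 * m x := by
      rw [Finset.sum_comm]
      rw [show (∑ y ∈ T, ∑ x ∈ T, (if ℓ y = ℓ x + 1 then E x y else 0) * (f y) ^ 2)
          = ∑ y ∈ T, (∑ x ∈ T, if ℓ y = ℓ x + 1 then E x y else 0) * (f y) ^ 2
        from Finset.sum_congr rfl fun y _ => (Finset.sum_mul _ _ _).symm]
      rw [← Finset.sum_subset hST (fun y _ hy => by rw [hSmem' y hy]; ring)]
      exact Finset.sum_congr rfl fun y hy => by rw [hrow_m y hy]; ring
    have hD_ub : (∑ x ∈ S, deg x * (f x) ^ 2 * m x)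
        ≤ (1 + 2 * ε') * (∑ x ∈ S, degp x * (f x) ^ 2 * m x)
          + c₀ * (∑ x ∈ S, (f x) ^ 2 * m x) := by
      calc ∑ x ∈ S, deg x * (f x) ^ 2 * m x
          ≤ ∑ x ∈ S, ((1 + 2 * ε') * (degp x * (f x) ^ 2 * m x) + c₀ * ((f x) ^ 2 * m x)) :=
            Finset.sum_le_sum fun x _ => by
              have h := hbd₀ x
              have hfm : 0 ≤ (f x) ^ 2 * m x := mul_nonneg (sq_nonneg _) (hm x).le
              calc deg x * (f x) ^ 2 * m x = deg x * ((f x) ^ 2 * m x) := by ring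
                _ ≤ ((1 + 2 * ε') * degp x + c₀) * ((f x) ^ 2 * m x) :=
                  mul_le_mul_of_nonneg_right h hfm
                _ = (1 + 2 * ε') * (degp x * (f x) ^ 2 * m x) + c₀ * ((f x) ^ 2 * m x) := by
                  ring
        _ = _ := by rw [Finset.sum_add_distrib, ← Finset.mul_sum, ← Finset.mul_sum]
    have hB_ub : (∑ x ∈ S, degm x * (f x) ^ 2 * m x)
        ≤ ε' * (∑ x ∈ S, degp x * (f x) ^ 2 * m x)
          + c₁ * (∑ x ∈ S, (f x) ^ 2 * m x) := by
      calc ∑ x ∈ S, degm x * (f x) ^ 2 * m x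
          ≤ ∑ x ∈ S, (ε' * (degp x * (f x) ^ 2 * m x) + c₁ * ((f x) ^ 2 * m x)) :=
            Finset.sum_le_sum fun x _ => by
              have h := hbd₁ x
              have hfm : 0 ≤ (f x) ^ 2 * m x := mul_nonneg (sq_nonneg _) (hm x).le
              calc degm x * (f x) ^ 2 * m x = degm x * ((f x) ^ 2 * m x) := by ring
                _ ≤ (ε' * degp x + c₁) * ((f x) ^ 2 * m x) :=
                  mul_le_mul_of_nonneg_right h hfm
                _ = ε' * (degp x * (f x) ^ 2 * m x) + c₁ * ((f x) ^ 2 * m x) := by ring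
        _ = _ := by rw [Finset.sum_add_distrib, ← Finset.mul_sum, ← Finset.mul_sum]
    have hN0 : 0 ≤ ∑ x ∈ S, (f x) ^ 2 * m x :=
      Finset.sum_nonneg fun x _ => mul_nonneg (sq_nonneg _) (hm x).le
    have hD0 : 0 ≤ ∑ x ∈ S, deg x * (f x) ^ 2 * m x :=
      Finset.sum_nonneg fun x _ =>
        mul_nonneg (mul_nonneg (hdeg_nn x) (sq_nonneg _)) (hm x).le
    have A4 : α * (∑ x ∈ S, deg x * (f x) ^ 2 * m x)
        ≤ ((1 - δ) - (1 / δ - 1) * ε') * (∑ x ∈ S, degp x * (f x) ^ 2 * m x)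
          + α * c₀ * (∑ x ∈ S, (f x) ^ 2 * m x) := by
      calc α * (∑ x ∈ S, deg x * (f x) ^ 2 * m x)
          ≤ α * ((1 + 2 * ε') * (∑ x ∈ S, degp x * (f x) ^ 2 * m x)
              + c₀ * (∑ x ∈ S, (f x) ^ 2 * m x)) :=
            mul_le_mul_of_nonneg_left hD_ub hα0
        _ = α * (1 + 2 * ε') * (∑ x ∈ S, degp x * (f x) ^ 2 * m x)
            + α * c₀ * (∑ x ∈ S, (f x) ^ 2 * m x) := by ring
        _ = _ := by rw [hβ]
    have A5 : (1 - ε) * (∑ x ∈ S, deg x * (f x) ^ 2 * m x)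
        ≤ α * (∑ x ∈ S, deg x * (f x) ^ 2 * m x) :=
      mul_le_mul_of_nonneg_right hαε hD0
    have A3 : (1 / δ - 1) * (∑ x ∈ S, degm x * (f x) ^ 2 * m x)
        ≤ (1 / δ - 1) * (ε' * (∑ x ∈ S, degp x * (f x) ^ 2 * m x)
            + c₁ * (∑ x ∈ S, (f x) ^ 2 * m x)) :=
      mul_le_mul_of_nonneg_left hB_ub hk0
    rw [sumAp, sumBm] at hQF_lb
    linarith [hsplitQ, hQB, hQH_nn, hQF_lb, A4, A5, A3, hN0]
  refine ⟨part1, ?_, ?_⟩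
  · -- equivalence of form norms
    obtain ⟨c, hc, h1⟩ := part1 (1/2) one_half_pos
    refine ⟨max 2 (2*c+1), lt_of_lt_of_le two_pos (le_max_left _ _), fun f hf => ?_⟩
    have hN0 : 0 ≤ ∑' x, (f x) ^ 2 * m x :=
      tsum_nonneg fun x => mul_nonneg (sq_nonneg _) (hm x).le
    have hD0 : 0 ≤ ∑' x, deg x * (f x) ^ 2 * m x :=
      tsum_nonneg fun x => mul_nonneg (mul_nonneg (hdeg_nn x) (sq_nonneg _)) (hm x).le
    have hQ0 : 0 ≤ ∑' (x : V), ∑' (y : V), E x y * (f x - f y) ^ 2 :=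
      tsum_nonneg fun x => tsum_nonneg fun y => mul_nonneg (hE_nonneg x y) (sq_nonneg _)
    have h4 := hQ4D f hf
    have h12 := h1 f hf
    constructor
    · have e3 : 2 * (∑' x, deg x * (f x) ^ 2 * m x)
          ≤ max 2 (2*c+1) * (∑' x, deg x * (f x) ^ 2 * m x) :=
        mul_le_mul_of_nonneg_right (le_max_left _ _) hD0
      have e4 : 1 * (∑' x, (f x) ^ 2 * m x)
          ≤ max 2 (2*c+1) * (∑' x, (f x) ^ 2 * m x) :=
        mul_le_mul_of_nonneg_right (le_trans (by norm_num) (le_max_left 2 (2*c+1))) hN0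
      nlinarith [e3, e4, h4]
    · have e6 : 2 * ((1/2) * ∑' (x : V), ∑' (y : V), E x y * (f x - f y) ^ 2)
          ≤ max 2 (2*c+1) * ((1/2) * ∑' (x : V), ∑' (y : V), E x y * (f x - f y) ^ 2) :=
        mul_le_mul_of_nonneg_right (le_max_left _ _) (by linarith)
      have e7 : (2*c+1) * (∑' x, (f x) ^ 2 * m x)
          ≤ max 2 (2*c+1) * (∑' x, (f x) ^ 2 * m x) :=
        mul_le_mul_of_nonneg_right (le_max_right _ _) hN0
      nlinarith [e6, e7, h12]
  · -- Persson-type bound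
    intro M
    obtain ⟨c, hc, h1⟩ := part1 (1/2) one_half_pos
    obtain ⟨N₀, hN₀⟩ := hlim (2*(M + c))
    refine ⟨(Finset.range N₀).biUnion (fun n => (hlev_fin n).toFinset), fun f hf hK => ?_⟩
    have hd : ∀ x, f x ≠ 0 → 2*(M+c) ≤ deg x := by
      intro x hx
      have hx' : N₀ ≤ ℓ x := by
        by_contra h
        push_neg at h
        exact hx (hK x (Finset.mem_biUnion.mpr
          ⟨ℓ x, Finset.mem_range.mpr h, (hlev_fin (ℓ x)).mem_toFinset.mpr rfl⟩))
      have h3 := hN₀ x hx'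
      have h2 := hdeg_split x
      linarith [hdegm_nn x, hdeg0_nn x]
    have hsum1 : Summable (fun x => (f x) ^ 2 * m x) :=
      summable_of_ne_finset_zero (s := hf.toFinset) fun x hx => by
        have h : f x = 0 := by by_contra h; exact hx (hf.mem_toFinset.mpr h)
        rw [h]; ring
    have hsum2 : Summable (fun x => deg x * (f x) ^ 2 * m x) :=
      summable_of_ne_finset_zero (s := hf.toFinset) fun x hx => by
        have h : f x = 0 := by by_contra h; exact hx (hf.mem_toFinset.mpr h)
        rw [h]; ring
    have key : 2*(M+c) * (∑' x, (f x) ^ 2 * m x) ≤ ∑' x, deg x * (f x) ^ 2 * m x := by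
      rw [← tsum_mul_left]
      refine Summable.tsum_le_tsum (fun x => ?_) (hsum1.mul_left _) hsum2
      by_cases hx : f x = 0
      · simp [hx]
      · have h2 := hd x hx
        have hfm : 0 ≤ (f x) ^ 2 * m x := mul_nonneg (sq_nonneg _) (hm x).le
        calc 2*(M+c) * ((f x) ^ 2 * m x) ≤ deg x * ((f x) ^ 2 * m x) :=
              mul_le_mul_of_nonneg_right h2 hfm
          _ = deg x * (f x) ^ 2 * m x := by ring
    have h2 := h1 f hf
    have hN0 : 0 ≤ ∑' x, (f x) ^ 2 * m x :=
      tsum_nonneg fun x => mul_nonneg (sq_nonneg _) (hm x).le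
    linarith [key, h2, hN0]
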